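/- For all integers n ≥ 1 and d ≥ 2, l°_d(n) = max(1, n/2^d) · λ_d(B_d), where l°_d(n) is the supremum of volumes of disjoint unions of n open balls in ℝ^d whose intersection with every line has total length at most 1, and B_d is the d-dimensional ball of diameter 1. -/

import Mathlib

open Metric MeasureTheory

/-- every line meets `P` in a set of total length at most `1`. -/
def LineCondition {d : ℕ} (P : Set (EuclideanSpace ℝ (Fin d))) : Prop :=
  ∀ p v : EuclideanSpace ℝ (Fin d), ‖v‖ = 1 → volume {t : ℝ | p + t • v ∈ P} ≤ 1

/-- `P` is a disjoint union of `n` open balls. -/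
def IsBallUnion {d : ℕ} (n : ℕ) (P : Set (EuclideanSpace ℝ (Fin d))) : Prop :=
  ∃ c : Fin n → EuclideanSpace ℝ (Fin d), ∃ r : Fin n → ℝ, (∀ i, 0 < r i) ∧
    (Pairwise fun i j => Disjoint (ball (c i) (r i)) (ball (c j) (r j))) ∧
    P = ⋃ i, ball (c i) (r i)

/-- `l°_d(n)`: supremum of volumes of disjoint unions of `n` open balls whose
intersection with every line has total length at most `1`. -/
noncomputable def lCirc (d n : ℕ) : ENNReal :=
  sSup {μ | ∃ P : Set (EuclideanSpace ℝ (Fin d)),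
    IsBallUnion n P ∧ LineCondition P ∧ μ = volume P}


open Set Real Filter Topology RealInnerProductSpace

lemma lineSet_subset {d : ℕ} (p v c : EuclideanSpace ℝ (Fin d)) (hv : ‖v‖ = 1) (r : ℝ) :
    {t : ℝ | p + t • v ∈ ball c r} ⊆ ball (⟪c - p, v⟫) r := by
  intro t ht
  simp only [Set.mem_setOf_eq, mem_ball, dist_eq_norm] at ht ⊢
  have h1 : |t - ⟪c - p, v⟫| ≤ ‖p + t • v - c‖ := by
    have h2 := abs_real_inner_le_norm (p + t • v - c) v
    rw [hv, mul_one] at h2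
    have h3 : ⟪p + t • v - c, v⟫ = t - ⟪c - p, v⟫ := by
      rw [inner_sub_left, inner_add_left, real_inner_smul_left, inner_sub_left,
        real_inner_self_eq_norm_sq, hv]
      ring
    rwa [h3] at h2
  calc ‖t - ⟪c - p, v⟫‖ = |t - ⟪c - p, v⟫| := rfl
    _ ≤ ‖p + t • v - c‖ := h1
    _ < r := ht

lemma lineSet_vol {d : ℕ} (p v c : EuclideanSpace ℝ (Fin d)) (hv : ‖v‖ = 1) (r : ℝ) :
    volume {t : ℝ | p + t • v ∈ ball c r} ≤ ENNReal.ofReal (2 * r) := by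
  calc volume {t : ℝ | p + t • v ∈ ball c r} ≤ volume (ball (⟪c - p, v⟫) r) :=
        measure_mono (lineSet_subset p v c hv r)
    _ = ENNReal.ofReal (2 * r) := Real.volume_ball _ _

lemma lineSet_center {d : ℕ} (c v : EuclideanSpace ℝ (Fin d)) (hv : ‖v‖ = 1) (r : ℝ) :
    {t : ℝ | c + t • v ∈ ball c r} = ball (0 : ℝ) r := by
  ext t
  simp [mem_ball, dist_eq_norm, norm_smul, hv, Real.norm_eq_abs, abs_sub_comm]

lemma exists_mid {a b c : ℝ} (h1 : a ≤ b) (h2 : b ≤ c) :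
    ∃ μ : ℝ, μ ∈ Set.Icc (0:ℝ) 1 ∧ b = μ * a + (1 - μ) * c := by
  rcases eq_or_lt_of_le (h1.trans h2) with h | h
  · exact ⟨0, ⟨le_refl _, zero_le_one⟩, by rw [zero_mul, sub_zero, one_mul]; linarith⟩
  · have hca : c - a ≠ 0 := by intro h0; linarith [sub_eq_zero.mp h0]
    have hμ : (c - b)/(c - a) * (c - a) = c - b := div_mul_cancel₀ _ hca
    refine ⟨(c - b)/(c - a), ⟨div_nonneg (by linarith) (by linarith),
      by rw [div_le_one (by linarith)]; linarith⟩, ?_⟩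
    linear_combination hμ

lemma one_le_abs_natCast_sub {a b : ℕ} (h : a ≠ b) : 1 ≤ |(a:ℝ) - b| := by
  rcases lt_or_gt_of_ne h with h' | h'
  · have : (a:ℝ) + 1 ≤ b := by exact_mod_cast h'
    rw [abs_sub_comm, abs_of_nonneg (by linarith)]; linarith
  · have : (b:ℝ) + 1 ≤ a := by exact_mod_cast h'
    rw [abs_of_nonneg (by linarith)]; linarith

lemma sum_pow_le {n d : ℕ} (hn : 1 ≤ n) (hd : 1 ≤ d) (X : Fin n → ℝ)
    (hp : ∀ i, 0 < X i) (h1 : ∀ i, X i ≤ 1)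
    (hpair : ∀ i j, i ≠ j → X i + X j ≤ 1) :
    ∑ i, X i ^ d ≤ max 1 ((n:ℝ)/2^d) := by
  have h2d : (0:ℝ) < 2 ^ d := by positivity
  by_cases hall : ∀ i, X i ≤ 1/2
  · calc ∑ i, X i ^ d ≤ ∑ _i : Fin n, (1/2:ℝ) ^ d := by
          apply Finset.sum_le_sum
          intro i _
          exact pow_le_pow_left₀ (hp i).le (hall i) d
      _ = (n:ℝ) / 2 ^ d := by
          rw [Finset.sum_const, Finset.card_univ, Fintype.card_fin, nsmul_eq_mul,
            div_pow, one_pow, div_eq_mul_inv, div_eq_mul_inv]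
          ring
      _ ≤ _ := le_max_right _ _
  · push_neg at hall
    obtain ⟨i0, hi0⟩ := hall
    set a := X i0 with ha
    have hother : ∀ j ∈ Finset.univ.erase i0, X j ^ d ≤ (1 - a) ^ d := by
      intro j hj
      have hne := Finset.ne_of_mem_erase hj
      exact pow_le_pow_left₀ (hp j).le (by linarith [hpair j i0 hne]) d
    have hsum : ∑ i, X i ^ d ≤ a ^ d + ((n:ℝ) - 1) * (1 - a) ^ d := by
      rw [← Finset.add_sum_erase _ _ (Finset.mem_univ i0)]
      have : ∑ j ∈ Finset.univ.erase i0, X j ^ d ≤ ((n:ℝ) - 1) * (1 - a) ^ d := by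
        calc ∑ j ∈ Finset.univ.erase i0, X j ^ d
            ≤ ∑ _j ∈ Finset.univ.erase i0, (1 - a) ^ d := Finset.sum_le_sum hother
          _ = ((n:ℝ) - 1) * (1 - a) ^ d := by
              rw [Finset.sum_const, Finset.card_erase_of_mem (Finset.mem_univ i0),
                Finset.card_univ, Fintype.card_fin, nsmul_eq_mul, Nat.cast_sub hn,
                Nat.cast_one]
      linarith
    have c1 : ConvexOn ℝ (Set.Icc (0:ℝ) 1) (fun x : ℝ => x ^ d) :=
      (convexOn_pow d).subset (fun x hx => hx.1) (convex_Icc _ _)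
    have c2 : ConvexOn ℝ (Set.Icc (0:ℝ) 1) (fun x : ℝ => ((n:ℝ) - 1) * (1 - x) ^ d) := by
      refine ⟨convex_Icc _ _, ?_⟩
      intro x hx y hy p q hp' hq' hpq
      have hkey := (convexOn_pow (𝕜 := ℝ) d).2 (Set.mem_Ici.2 (by linarith [hx.2] : (0:ℝ) ≤ 1 - x))
        (Set.mem_Ici.2 (by linarith [hy.2] : (0:ℝ) ≤ 1 - y)) hp' hq' hpq
      simp only [smul_eq_mul] at hkey ⊢
      have he : 1 - (p * x + q * y) = p * (1 - x) + q * (1 - y) := by linarith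
      have hn1 : (0:ℝ) ≤ (n:ℝ) - 1 := by
        have : (1:ℝ) ≤ n := by exact_mod_cast hn
        linarith
      rw [he]
      nlinarith [hkey]
    have c3 : ConvexOn ℝ (Set.Icc (0:ℝ) 1) (fun x : ℝ => x ^ d + ((n:ℝ) - 1) * (1 - x) ^ d) :=
      c1.add c2
    have hmem : a ∈ segment ℝ (1/2 : ℝ) 1 := by
      rw [segment_eq_Icc (by norm_num)]
      exact ⟨hi0.le, h1 i0⟩
    have hbound := c3.le_on_segment (by constructor <;> norm_num) (by constructor <;> norm_num) hmem
    have e1 : ((1:ℝ)/2) ^ d + ((n:ℝ) - 1) * (1 - 1/2) ^ d = (n:ℝ)/2^d := by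
      have h12 : (1 - 1/2 : ℝ) = 1/2 := by norm_num
      rw [h12, div_pow, one_pow]
      ring
    have e2 : ((1:ℝ)) ^ d + ((n:ℝ) - 1) * (1 - 1) ^ d = 1 := by
      simp [zero_pow (by omega : d ≠ 0)]
    rw [e1, e2] at hbound
    calc ∑ i, X i ^ d ≤ a ^ d + ((n:ℝ) - 1) * (1 - a) ^ d := hsum
      _ ≤ max ((n:ℝ)/2^d) 1 := hbound
      _ = max 1 ((n:ℝ)/2^d) := max_comm _ _

lemma nontrivial_euc {d : ℕ} (hd : 1 ≤ d) : Nontrivial (EuclideanSpace ℝ (Fin d)) := by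
  refine ⟨EuclideanSpace.single ⟨0, by omega⟩ (1:ℝ), 0, ?_⟩
  intro h
  have := congrArg norm h
  rw [EuclideanSpace.norm_single, norm_one, norm_zero] at this
  norm_num at this

lemma lCirc_le (n d : ℕ) (hn : 1 ≤ n) (hd : 2 ≤ d) :
    lCirc d n ≤ ENNReal.ofReal (max 1 ((n : ℝ) / 2 ^ d)) *
      volume (ball (0 : EuclideanSpace ℝ (Fin d)) (1/2)) := by
  haveI := nontrivial_euc (d := d) (by omega)
  apply sSup_le
  rintro μ ⟨P, ⟨c, r, hr, hdisj, rfl⟩, hline, rfl⟩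
  set v0 : EuclideanSpace ℝ (Fin d) := EuclideanSpace.single ⟨0, by omega⟩ (1:ℝ) with hv0
  have hv0n : ‖v0‖ = 1 := by rw [hv0, EuclideanSpace.norm_single, norm_one]
  -- each diameter ≤ 1
  have hX1 : ∀ i, 2 * r i ≤ 1 := by
    intro i
    have hsub : ball (0:ℝ) (r i) ⊆ {t : ℝ | c i + t • v0 ∈ ⋃ j, ball (c j) (r j)} := by
      rw [← lineSet_center (c i) v0 hv0n (r i)]
      intro t ht
      exact Set.mem_iUnion.2 ⟨i, ht⟩
    have := (measure_mono hsub).trans (hline (c i) v0 hv0n)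
    rw [Real.volume_ball] at this
    exact (ENNReal.ofReal_le_one).mp this
  -- pairwise sums ≤ 1
  have hX2 : ∀ i j, i ≠ j → 2 * r i + 2 * r j ≤ 1 := by
    intro i j hij
    have hcne : c i ≠ c j := by
      intro he
      have : (c i) ∈ ball (c i) (r i) ∩ ball (c j) (r j) := by
        constructor
        · exact mem_ball_self (hr i)
        · rw [← he]; exact mem_ball_self (hr j)
      exact (hdisj hij).ne_of_mem this.1 this.2 rfl
    set w := c j - c i with hw
    have hwne : ‖w‖ ≠ 0 := by
      simp only [hw, norm_ne_zero_iff, sub_ne_zero]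
      exact fun h => hcne h.symm
    set v : EuclideanSpace ℝ (Fin d) := ‖w‖⁻¹ • w with hv
    have hvn : ‖v‖ = 1 := by
      rw [hv, norm_smul, norm_inv, norm_norm, inv_mul_cancel₀ hwne]
    have hi : {t : ℝ | c i + t • v ∈ ball (c i) (r i)} = ball (0:ℝ) (r i) :=
      lineSet_center _ _ hvn _
    have hj : {t : ℝ | c i + t • v ∈ ball (c j) (r j)} = ball (‖w‖) (r j) := by
      ext t
      have hwv : (‖w‖) • v = w := by rw [hv, smul_smul, mul_inv_cancel₀ hwne, one_smul]
      have : c i + t • v - c j = (t - ‖w‖) • v := by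
        rw [sub_smul, hwv, hw]
        abel
      simp only [Set.mem_setOf_eq, mem_ball, dist_eq_norm, this, norm_smul, hvn, mul_one,
        Real.norm_eq_abs, Real.dist_eq]
    have hsubU : ball (0:ℝ) (r i) ∪ ball (‖w‖) (r j)
        ⊆ {t : ℝ | c i + t • v ∈ ⋃ k, ball (c k) (r k)} := by
      rintro t (ht | ht)
      · rw [← hi] at ht; exact Set.mem_iUnion.2 ⟨i, ht⟩
      · rw [← hj] at ht; exact Set.mem_iUnion.2 ⟨j, ht⟩
    have hdisj2 : Disjoint (ball (0:ℝ) (r i)) (ball (‖w‖) (r j)) := by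
      rw [Set.disjoint_left]
      intro t hti htj
      rw [← hi] at hti
      rw [← hj] at htj
      exact (hdisj hij).ne_of_mem hti htj rfl
    have hμ : volume (ball (0:ℝ) (r i) ∪ ball (‖w‖) (r j)) =
        ENNReal.ofReal (2 * r i) + ENNReal.ofReal (2 * r j) := by
      rw [measure_union hdisj2 measurableSet_ball, Real.volume_ball, Real.volume_ball]
    have hle := (measure_mono hsubU).trans (hline (c i) v hvn)
    rw [hμ, ← ENNReal.ofReal_add (by linarith [hr i]) (by linarith [hr j])] at hle
    exact (ENNReal.ofReal_le_one).mp hle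
  -- volume computation
  have hvol : volume (⋃ i, ball (c i) (r i)) =
      ∑ i, ENNReal.ofReal (r i ^ d) * volume (ball (0 : EuclideanSpace ℝ (Fin d)) 1) := by
    rw [measure_iUnion hdisj (fun i => measurableSet_ball), tsum_fintype]
    congr 1
    ext i
    rw [Measure.addHaar_ball _ _ (hr i).le, finrank_euclideanSpace_fin]
  rw [hvol]
  have hb12 : volume (ball (0 : EuclideanSpace ℝ (Fin d)) (1/2)) =
      ENNReal.ofReal ((1/2:ℝ) ^ d) * volume (ball (0 : EuclideanSpace ℝ (Fin d)) 1) := by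
    rw [Measure.addHaar_ball _ _ (by norm_num : (0:ℝ) ≤ 1/2), finrank_euclideanSpace_fin]
  rw [hb12, ← mul_assoc, ← ENNReal.ofReal_mul (le_trans zero_le_one (le_max_left _ _))]
  rw [← Finset.sum_mul]
  apply mul_le_mul_left
  rw [← ENNReal.ofReal_sum_of_nonneg (fun i _ => pow_nonneg (hr i).le _)]
  apply ENNReal.ofReal_le_ofReal
  have hkey := sum_pow_le (d := d) hn (by omega) (fun i => 2 * r i)
    (fun i => by show (0:ℝ) < 2 * r i; linarith [hr i]) (fun i => hX1 i) hX2
  have heq : ∀ i : Fin n, r i ^ d = (2 * r i) ^ d * (1/2:ℝ) ^ d := by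
    intro i
    rw [← mul_pow]
    congr 1
    ring
  calc ∑ i, r i ^ d = (∑ i, (2 * r i) ^ d) * (1/2:ℝ) ^ d := by
        rw [Finset.sum_mul]
        exact Finset.sum_congr rfl (fun i _ => heq i)
    _ ≤ max 1 ((n:ℝ)/2^d) * (1/2:ℝ) ^ d := by
        apply mul_le_mul_of_nonneg_right hkey (by positivity)


lemma le_lCirc {d n : ℕ} (P : Set (EuclideanSpace ℝ (Fin d)))
    (h1 : IsBallUnion n P) (h2 : LineCondition P) : volume P ≤ lCirc d n :=
  le_sSup ⟨P, h1, h2, rfl⟩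

lemma lineSet_union {d n : ℕ} (p v : EuclideanSpace ℝ (Fin d))
    (c : Fin n → EuclideanSpace ℝ (Fin d)) (r : Fin n → ℝ) :
    {t : ℝ | p + t • v ∈ ⋃ i, ball (c i) (r i)} = ⋃ i, {t : ℝ | p + t • v ∈ ball (c i) (r i)} := by
  ext t
  simp [Set.mem_iUnion]

lemma caseA (n d : ℕ) (hn : 1 ≤ n) (hd : 2 ≤ d) {δ : ℝ} (hδ0 : 0 < δ) (hδ : δ ≤ 1/4) :
    ENNReal.ofReal ((1/2 - δ)^d) * volume (ball (0 : EuclideanSpace ℝ (Fin d)) 1)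
      ≤ lCirc d n := by
  haveI := nontrivial_euc (d := d) (by omega)
  set e0 : EuclideanSpace ℝ (Fin d) := EuclideanSpace.single ⟨0, by omega⟩ (1:ℝ) with he0
  have he0n : ‖e0‖ = 1 := by rw [he0, EuclideanSpace.norm_single, norm_one]
  set c : Fin n → EuclideanSpace ℝ (Fin d) := fun i => ((3:ℝ) * i) • e0 with hc
  set r : Fin n → ℝ := fun i => if (i : ℕ) = 0 then 1/2 - δ else δ / n with hrdef
  have hrpos : ∀ i, 0 < r i := by
    intro i
    rw [hrdef]
    dsimp only
    split
    · linarith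
    · positivity
  have hrle : ∀ i, r i ≤ 1/2 := by
    intro i
    rw [hrdef]
    dsimp only
    split
    · linarith
    · rw [div_le_iff₀ (by exact_mod_cast hn : (0:ℝ) < n)]
      have : (1:ℝ) ≤ n := by exact_mod_cast hn
      nlinarith
  have hdist : ∀ i j : Fin n, i ≠ j → (3:ℝ) ≤ dist (c i) (c j) := by
    intro i j hij
    have : c i - c j = ((3:ℝ) * i - 3 * j) • e0 := by rw [hc]; dsimp only; rw [← sub_smul]
    rw [dist_eq_norm, this, norm_smul, he0n, mul_one, Real.norm_eq_abs]
    have h1 : 1 ≤ |(i:ℝ) - (j:ℝ)| := one_le_abs_natCast_sub (fun h => hij (Fin.ext h))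
    calc (3:ℝ) = 3 * 1 := by norm_num
      _ ≤ 3 * |(i:ℝ) - j| := by linarith
      _ = |3 * (i:ℝ) - 3 * j| := by
          rw [show (3:ℝ) * (i:ℝ) - 3 * j = 3 * ((i:ℝ) - j) by ring, abs_mul,
            abs_of_nonneg (by norm_num : (0:ℝ) ≤ 3)]
  have hdisj : Pairwise fun i j => Disjoint (ball (c i) (r i)) (ball (c j) (r j)) := by
    intro i j hij
    apply ball_disjoint_ball
    calc r i + r j ≤ 1/2 + 1/2 := add_le_add (hrle i) (hrle j)
      _ ≤ 3 := by norm_num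
      _ ≤ dist (c i) (c j) := hdist i j hij
  have hline : LineCondition (⋃ i, ball (c i) (r i)) := by
    intro p v hv
    rw [lineSet_union]
    calc volume (⋃ i, {t : ℝ | p + t • v ∈ ball (c i) (r i)})
        ≤ ∑' i, volume {t : ℝ | p + t • v ∈ ball (c i) (r i)} := measure_iUnion_le _
      _ = ∑ i, volume {t : ℝ | p + t • v ∈ ball (c i) (r i)} := tsum_fintype _
      _ ≤ ∑ i, ENNReal.ofReal (2 * r i) :=
          Finset.sum_le_sum (fun i _ => lineSet_vol p v (c i) hv (r i))
      _ = ENNReal.ofReal (∑ i, 2 * r i) :=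
          (ENNReal.ofReal_sum_of_nonneg (fun i _ => by linarith [hrpos i])).symm
      _ ≤ 1 := by
          rw [ENNReal.ofReal_le_one]
          have hri0 : r (⟨0, by omega⟩ : Fin n) = 1/2 - δ := by simp [hrdef]
          have hsml : ∑ j ∈ Finset.univ.erase (⟨0, by omega⟩ : Fin n), 2 * r j
              = ((n:ℝ) - 1) * (2 * (δ/n)) := by
            have hcg : ∀ j ∈ Finset.univ.erase (⟨0, by omega⟩ : Fin n), 2 * r j = 2 * (δ/n) := by
              intro j hj
              have hne := Finset.ne_of_mem_erase hj
              have hjv : (j : ℕ) ≠ 0 := fun h => hne (Fin.ext h)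
              rw [hrdef]
              dsimp only
              rw [if_neg hjv]
            rw [Finset.sum_congr rfl hcg, Finset.sum_const,
              Finset.card_erase_of_mem (Finset.mem_univ _), Finset.card_univ,
              Fintype.card_fin, nsmul_eq_mul, Nat.cast_sub hn, Nat.cast_one]
          have hsum : ∑ i, 2 * r i = 2 * (1/2 - δ) + ((n:ℝ) - 1) * (2 * (δ/n)) := by
            rw [← Finset.add_sum_erase _ _ (Finset.mem_univ (⟨0, by omega⟩ : Fin n)), hri0, hsml]
          rw [hsum]
          have hnr : (1:ℝ) ≤ n := by exact_mod_cast hn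
          have : ((n:ℝ) - 1) * (2 * (δ/n)) ≤ 2 * δ := by
            rw [div_eq_mul_inv]
            have h1 : ((n:ℝ) - 1) ≤ n := by linarith
            have h2 : (0:ℝ) < n := by linarith
            calc ((n:ℝ) - 1) * (2 * (δ * (↑n)⁻¹)) = 2 * δ * (((n:ℝ) - 1) / n) := by field_simp
              _ ≤ 2 * δ * 1 := by
                  apply mul_le_mul_of_nonneg_left _ (by linarith)
                  rw [div_le_one h2]
                  linarith
              _ = 2 * δ := by ring
          linarith
  have hmem : volume (⋃ i, ball (c i) (r i)) ≤ lCirc d n :=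
    le_lCirc _ ⟨c, r, hrpos, hdisj, rfl⟩ hline
  refine le_trans ?_ hmem
  have hsub : ball (c ⟨0, by omega⟩) (1/2 - δ) ⊆ ⋃ i, ball (c i) (r i) := by
    intro x hx
    apply Set.mem_iUnion.2 ⟨⟨0, by omega⟩, ?_⟩
    have : r (⟨0, by omega⟩ : Fin n) = 1/2 - δ := by simp [hrdef]
    rwa [this]
  refine le_trans ?_ (measure_mono hsub)
  rw [Measure.addHaar_ball _ _ (by linarith : (0:ℝ) ≤ 1/2 - δ), finrank_euclideanSpace_fin]

lemma inner_combo {d : ℕ} (u w z : EuclideanSpace ℝ (Fin d)) (μ : ℝ) :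
    ⟪w - (μ • u + (1-μ) • z), w⟫ = ⟪w,w⟫ - μ*⟪u,w⟫ - (1-μ)*⟪z,w⟫ := by
  rw [inner_sub_left, inner_add_left, real_inner_smul_left, real_inner_smul_left]
  ring

lemma norm_sub_sq'' {d : ℕ} (u w : EuclideanSpace ℝ (Fin d)) :
    ‖u - w‖^2 = ⟪u,u⟫ - 2*⟪u,w⟫ + ⟪w,w⟫ := by
  rw [← real_inner_self_eq_norm_sq, inner_sub_left, inner_sub_right, inner_sub_right,
    real_inner_comm w u]
  ring

lemma cos_le_aux {n : ℕ} (hn : 3 ≤ n) {x : ℝ} (h1 : 2*π/n ≤ x) (h2 : x ≤ 2*π - 2*π/n) :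
    Real.cos x ≤ Real.cos (2*π/n) := by
  have hπ := Real.pi_pos
  have hn0 : (0:ℝ) < n := by exact_mod_cast Nat.lt_of_lt_of_le (by norm_num) hn
  have hn3 : (3:ℝ) ≤ n := by exact_mod_cast hn
  have hθπ : 2*π/n ≤ π := by
    rw [div_le_iff₀ hn0]
    nlinarith
  have hθ0 : 0 < 2*π/n := by positivity
  rcases le_total x π with hx | hx
  · exact Real.cos_le_cos_of_nonneg_of_le_pi hθ0.le hx h1
  · rw [← Real.cos_two_pi_sub]
    exact Real.cos_le_cos_of_nonneg_of_le_pi hθ0.le (by linarith) (by linarith)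

set_option maxHeartbeats 2000000 in
lemma caseB (n d : ℕ) (hn5 : 5 ≤ n) (hd : 2 ≤ d) {δ : ℝ} (hδ0 : 0 < δ) (hδ : δ ≤ 1/8) :
    (n : ENNReal) * (ENNReal.ofReal ((1/4 - δ)^d)
      * volume (ball (0 : EuclideanSpace ℝ (Fin d)) 1)) ≤ lCirc d n := by
  classical
  haveI := nontrivial_euc (d := d) (by omega)
  have hπ := Real.pi_pos
  have hn0 : (0:ℝ) < n := by exact_mod_cast Nat.lt_of_lt_of_le (by norm_num) hn5
  set θ : ℝ := 2*π/n with hθ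
  have hθ0 : 0 < θ := by positivity
  have hθπ : θ ≤ π := by
    rw [hθ, div_le_iff₀ hn0]
    have : (5:ℝ) ≤ n := by exact_mod_cast hn5
    nlinarith
  have hcos1 : Real.cos θ < 1 := by
    have := Real.cos_lt_cos_of_nonneg_of_le_pi (le_refl (0:ℝ)) hθπ hθ0
    rwa [Real.cos_zero] at this
  set R : ℝ := max 1 (1/(1 - Real.cos θ)) with hR
  have hR1 : (1:ℝ) ≤ R := le_max_left _ _
  have hR0 : (0:ℝ) < R := by linarith
  have hRcos : 1 ≤ R * (1 - Real.cos θ) := by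
    have h2 : 1/(1 - Real.cos θ) ≤ R := le_max_right _ _
    rw [div_le_iff₀ (by linarith)] at h2
    linarith [mul_comm R (1 - Real.cos θ)]
  set rr : ℝ := 1/4 - δ with hrr
  have hrr0 : 0 < rr := by rw [hrr]; linarith
  have hrr4 : rr < 1/4 := by rw [hrr]; linarith
  clear_value R rr
  set e0 : EuclideanSpace ℝ (Fin d) := EuclideanSpace.single ⟨0, by omega⟩ (1:ℝ) with he0
  set e1 : EuclideanSpace ℝ (Fin d) := EuclideanSpace.single ⟨1, by omega⟩ (1:ℝ) with he1
  have base : ∀ u w : Fin d, ⟪(EuclideanSpace.single u (1:ℝ) : EuclideanSpace ℝ (Fin d)),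
      EuclideanSpace.single w 1⟫ = if u = w then 1 else 0 := by
    intro u w
    rw [EuclideanSpace.inner_single_left]
    simp [EuclideanSpace.single_apply, eq_comm]
  have h01 : (⟨0, by omega⟩ : Fin d) ≠ (⟨1, by omega⟩ : Fin d) := by simp [Fin.ext_iff]
  have hinner : ∀ a b a' b' : ℝ, ⟪a•e0 + b•e1, a'•e0 + b'•e1⟫ = a*a' + b*b' := by
    intro a b a' b'
    rw [he0, he1]
    simp only [inner_add_left, inner_add_right, real_inner_smul_left, real_inner_smul_right,
      base]
    simp [h01, Ne.symm h01]
    ring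
  obtain ⟨C, hCC⟩ : ∃ C : Fin n → EuclideanSpace ℝ (Fin d),
      ∀ i j : Fin n, ⟪C i, C j⟫ = R^2 * Real.cos (θ*i - θ*j) := by
    refine ⟨fun k => (R * Real.cos (θ * k)) • e0 + (R * Real.sin (θ * k)) • e1, ?_⟩
    intro i j
    rw [hinner, Real.cos_sub]
    ring
  have hnormC : ∀ i, ‖C i‖ = R := by
    intro i
    have h := hCC i i
    rw [sub_self, Real.cos_zero, mul_one, real_inner_self_eq_norm_sq] at h
    rw [← Real.sqrt_sq (norm_nonneg (C i)), h, Real.sqrt_sq hR0.le]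
  have hcosΔ : ∀ i j : Fin n, i ≠ j → Real.cos (θ*i - θ*j) ≤ Real.cos θ := by
    intro i j hij
    have habs : θ*i - θ*j = θ * ((i:ℝ) - j) := by ring
    rw [habs, ← Real.cos_abs, abs_mul, abs_of_pos hθ0]
    have hvne : (i:ℕ) ≠ (j:ℕ) := fun h => hij (Fin.ext h)
    have h1 : 1 ≤ |(i:ℝ) - j| := one_le_abs_natCast_sub hvne
    have h2 : |(i:ℝ) - j| ≤ (n:ℝ) - 1 := by
      have hi : (i:ℝ) ≤ (n:ℝ) - 1 := by
        have h' : (i:ℕ) + 1 ≤ n := i.is_lt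
        have h'' : ((i:ℕ):ℝ) + 1 ≤ (n:ℝ) := by exact_mod_cast h'
        linarith
      have hj : (j:ℝ) ≤ (n:ℝ) - 1 := by
        have h' : (j:ℕ) + 1 ≤ n := j.is_lt
        have h'' : ((j:ℕ):ℝ) + 1 ≤ (n:ℝ) := by exact_mod_cast h'
        linarith
      have hi0 : (0:ℝ) ≤ (i:ℝ) := by positivity
      have hj0 : (0:ℝ) ≤ (j:ℝ) := by positivity
      rw [abs_le]
      constructor <;> linarith
    have hub : θ * |(i:ℝ) - j| ≤ 2*π - 2*π/n := by
      have hm : θ * |(i:ℝ) - j| ≤ θ * ((n:ℝ) - 1) :=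
        mul_le_mul_of_nonneg_left h2 hθ0.le
      have he : θ * ((n:ℝ) - 1) = 2*π - 2*π/n := by
        rw [hθ]
        field_simp
      linarith
    have hlb : 2*π/n ≤ θ * |(i:ℝ) - j| := by
      calc 2*π/n = θ * 1 := by rw [hθ, mul_one]
        _ ≤ θ * |(i:ℝ) - j| := mul_le_mul_of_nonneg_left h1 hθ0.le
    exact cos_le_aux (by omega) hlb hub
  have hgeom : ∀ (j i k : Fin n), j ≠ i → j ≠ k → ∀ μ : ℝ, 0 ≤ μ → μ ≤ 1 →
      1 ≤ ‖C j - (μ • C i + (1-μ) • C k)‖ := by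
    intro j i k hji hjk μ hμ0 hμ1
    set x := C j - (μ • C i + (1-μ) • C k) with hx
    have hinn : ⟪x, C j⟫ = R^2 - μ * (R^2 * Real.cos (θ*i - θ*j))
        - (1-μ) * (R^2 * Real.cos (θ*k - θ*j)) := by
      rw [hx, inner_combo, hCC j j, hCC i j, hCC k j, sub_self, Real.cos_zero, mul_one]
    have hci : Real.cos (θ*i - θ*j) ≤ Real.cos θ := hcosΔ i j (fun h => hji h.symm)
    have hck : Real.cos (θ*k - θ*j) ≤ Real.cos θ := hcosΔ k j (fun h => hjk h.symm)
    have hlow : R ≤ ⟪x, C j⟫ := by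
      rw [hinn]
      have e1' : μ * (R^2 * Real.cos (θ*i - θ*j)) ≤ μ * (R^2 * Real.cos θ) :=
        mul_le_mul_of_nonneg_left (mul_le_mul_of_nonneg_left hci (sq_nonneg R)) hμ0
      have e2' : (1-μ) * (R^2 * Real.cos (θ*k - θ*j)) ≤ (1-μ) * (R^2 * Real.cos θ) :=
        mul_le_mul_of_nonneg_left (mul_le_mul_of_nonneg_left hck (sq_nonneg R)) (by linarith)
      have e4 : R * (R * (1 - Real.cos θ)) = R^2 - R^2 * Real.cos θ := by ring
      have e5 : R * 1 ≤ R * (R * (1 - Real.cos θ)) :=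
        mul_le_mul_of_nonneg_left hRcos hR0.le
      nlinarith
    have hup : ⟪x, C j⟫ ≤ ‖x‖ * R := by
      have h' := real_inner_le_norm x (C j)
      rwa [hnormC j] at h'
    have h1R : 1 * R ≤ ‖x‖ * R := by linarith
    exact le_of_mul_le_mul_right (by linarith : 1 * R ≤ ‖x‖ * R) hR0
  have hdisj : Pairwise fun i j => Disjoint (ball (C i) rr) (ball (C j) rr) := by
    intro i j hij
    apply ball_disjoint_ball
    have hsq : ‖C i - C j‖^2 = 2*R^2 - 2*(R^2 * Real.cos (θ*i - θ*j)) := by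
      rw [norm_sub_sq'', hCC i i, hCC i j, hCC j j, sub_self, sub_self, Real.cos_zero, mul_one]
      have hsymm : Real.cos (θ*j - θ*i) = Real.cos (θ*i - θ*j) := by
        rw [← Real.cos_neg (θ*j - θ*i)]
        congr 1
        ring
      ring
    have h2 : 2 ≤ ‖C i - C j‖^2 := by
      rw [hsq]
      have hc := hcosΔ i j hij
      have e4 : R * (R * (1 - Real.cos θ)) = R^2 - R^2 * Real.cos θ := by ring
      have e5 : R * 1 ≤ R * (R * (1 - Real.cos θ)) :=
        mul_le_mul_of_nonneg_left hRcos hR0.le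
      nlinarith [sq_nonneg R]
    have h0 : (0:ℝ) ≤ rr + rr := by linarith
    have hn2 : rr + rr ≤ ‖C i - C j‖ := by
      have hsq2 : (rr + rr)^2 ≤ ‖C i - C j‖^2 := by
        have ha : (rr + rr)^2 ≤ (1/2:ℝ)^2 := pow_le_pow_left₀ h0 (by linarith) 2
        have hb : ((1:ℝ)/2)^2 ≤ 2 := by norm_num
        linarith
      exact (pow_le_pow_iff_left₀ h0 (norm_nonneg _) two_ne_zero).mp hsq2
    rwa [dist_eq_norm]
  have hline : LineCondition (⋃ i, ball (C i) rr) := by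
    intro p v hv
    rw [lineSet_union]
    set S : Fin n → Set ℝ := fun i => {t : ℝ | p + t • v ∈ ball (C i) rr} with hS
    set H : Finset (Fin n) := Finset.univ.filter (fun i => (S i).Nonempty) with hH
    have hU : ⋃ i, S i = ⋃ i ∈ H, S i := by
      ext t
      simp only [Set.mem_iUnion]
      constructor
      · rintro ⟨i, ht⟩
        exact ⟨i, by rw [hH]; exact Finset.mem_filter.2 ⟨Finset.mem_univ _, ⟨t, ht⟩⟩, ht⟩
      · rintro ⟨i, _, ht⟩
        exact ⟨i, ht⟩
    have hkey : ∀ (x y z : Fin n) (tx ty tz : ℝ), y ≠ x → y ≠ z →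
        p + tx • v ∈ ball (C x) rr → p + ty • v ∈ ball (C y) rr →
        p + tz • v ∈ ball (C z) rr → tx ≤ ty → ty ≤ tz → False := by
      intro x y z tx ty tz hyx hyz hx' hy' hz' h1 h2
      obtain ⟨μ, ⟨hμ0, hμ1⟩, hmid⟩ := exists_mid h1 h2
      have hdec : C y - (μ • C x + (1-μ) • C z) =
          (C y - (p + ty • v)) + (μ • ((p + tx • v) - C x) + (1-μ) • ((p + tz • v) - C z)) := by
        have e : μ • p + (1-μ) • p = p := by
          rw [← add_smul]
          norm_num
        have hpt : p + ty • v = μ • (p + tx • v) + (1-μ) • (p + tz • v) := by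
          rw [hmid]
          calc p + (μ * tx + (1-μ) * tz) • v
              = (μ • p + (1-μ) • p) + ((μ * tx) • v + ((1-μ) * tz) • v) := by
                rw [e, ← add_smul]
            _ = μ • (p + tx • v) + (1-μ) • (p + tz • v) := by
                rw [smul_add, smul_add, smul_smul, smul_smul]
                abel
        rw [hpt, smul_sub, smul_sub]
        abel
      have hb1 : ‖C y - (p + ty • v)‖ < rr := by
        rw [norm_sub_rev]
        rw [mem_ball, dist_eq_norm] at hy'
        exact hy'
      have hb2 : ‖(p + tx • v) - C x‖ < rr := by rw [mem_ball, dist_eq_norm] at hx'; exact hx'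
      have hb3 : ‖(p + tz • v) - C z‖ < rr := by rw [mem_ball, dist_eq_norm] at hz'; exact hz'
      have hnorm : ‖C y - (μ • C x + (1-μ) • C z)‖ < 2 * rr := by
        rw [hdec]
        calc ‖(C y - (p + ty • v)) + (μ • ((p + tx • v) - C x) + (1-μ) • ((p + tz • v) - C z))‖
            ≤ ‖C y - (p + ty • v)‖ + (‖μ • ((p + tx • v) - C x)‖ + ‖(1-μ) • ((p + tz • v) - C z)‖) :=
              (norm_add_le _ _).trans (by gcongr; exact norm_add_le _ _)
          _ = ‖C y - (p + ty • v)‖ + (μ * ‖(p + tx • v) - C x‖ + (1-μ) * ‖(p + tz • v) - C z‖) := by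
              rw [norm_smul, norm_smul, Real.norm_of_nonneg hμ0, Real.norm_of_nonneg (by linarith)]
          _ < 2 * rr := by nlinarith
      have hg := hgeom y x z hyx hyz μ hμ0 hμ1
      have h2rr : 2 * rr < 1 := by rw [hrr]; linarith
      linarith
    have hcard : H.card ≤ 2 := by
      by_contra hlt
      push_neg at hlt
      obtain ⟨a, b, c, ha, hb, hc, hab, hac, hbc⟩ := Finset.two_lt_card_iff.mp hlt
      rw [hH, Finset.mem_filter] at ha hb hc
      obtain ⟨ta, hta⟩ : (S a).Nonempty := ha.2
      obtain ⟨tb, htb⟩ : (S b).Nonempty := hb.2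
      obtain ⟨tc, htc⟩ : (S c).Nonempty := hc.2
      rw [hS] at hta htb htc
      simp only [Set.mem_setOf_eq] at hta htb htc
      rcases le_total ta tb with h1 | h1 <;> rcases le_total tb tc with h2 | h2 <;>
        rcases le_total ta tc with h3 | h3
      · exact hkey a b c ta tb tc (Ne.symm hab) hbc hta htb htc h1 h2
      · exact hkey a b c ta tb tc (Ne.symm hab) hbc hta htb htc h1 h2
      · exact hkey a c b ta tc tb (Ne.symm hac) (Ne.symm hbc) hta htc htb h3 h2
      · exact hkey c a b tc ta tb hac hab htc hta htb h3 h1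
      · exact hkey b a c tb ta tc hab hac htb hta htc h1 h3
      · exact hkey b c a tb tc ta (Ne.symm hbc) (Ne.symm hac) htb htc hta h2 h3
      · exact hkey c b a tc tb ta hbc (Ne.symm hab) htc htb hta h2 h1
      · exact hkey c b a tc tb ta hbc (Ne.symm hab) htc htb hta h2 h1
    calc volume (⋃ i, S i) = volume (⋃ i ∈ H, S i) := by rw [hU]
      _ ≤ ∑ i ∈ H, volume (S i) := measure_biUnion_finset_le H S
      _ ≤ ∑ _i ∈ H, ENNReal.ofReal (2 * rr) :=
          Finset.sum_le_sum (fun i _ => lineSet_vol p v (C i) hv rr)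
      _ = (H.card : ENNReal) * ENNReal.ofReal (2 * rr) := by
          rw [Finset.sum_const, nsmul_eq_mul]
      _ ≤ (2 : ENNReal) * ENNReal.ofReal (2 * rr) := by
          apply mul_le_mul_left
          exact_mod_cast hcard
      _ ≤ 1 := by
          rw [show ((2:ENNReal)) = ENNReal.ofReal 2 by norm_num,
            ← ENNReal.ofReal_mul (by norm_num)]
          rw [ENNReal.ofReal_le_one]
          rw [hrr]
          linarith
  have hmem : volume (⋃ i, ball (C i) rr) ≤ lCirc d n :=
    le_lCirc _ ⟨C, fun _ => rr, fun _ => hrr0, hdisj, rfl⟩ hline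
  refine le_trans (le_of_eq ?_) hmem
  rw [measure_iUnion hdisj (fun i => measurableSet_ball), tsum_fintype]
  have hball : ∀ i : Fin n, volume (ball (C i) rr) =
      ENNReal.ofReal (rr ^ d) * volume (ball (0 : EuclideanSpace ℝ (Fin d)) 1) := by
    intro i
    rw [Measure.addHaar_ball _ _ hrr0.le, finrank_euclideanSpace_fin]
  rw [Finset.sum_congr rfl (fun i _ => hball i), Finset.sum_const, Finset.card_univ,
    Fintype.card_fin, nsmul_eq_mul, hrr]

lemma tend_aux (c : ℝ) : Tendsto (fun m : ℕ => 1/((m:ℝ)+c)) atTop (𝓝 0) := by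
  have h : Tendsto (fun m : ℕ => (m:ℝ)+c) atTop atTop :=
    tendsto_atTop_add_const_right _ c tendsto_natCast_atTop_atTop
  have := h.inv_tendsto_atTop
  simp only [one_div]
  exact this

lemma div_le_aux (m : ℕ) (c : ℝ) (hc : 0 < c) : 1/((m:ℝ)+c) ≤ 1/c :=
  one_div_le_one_div_of_le hc (by linarith [Nat.cast_nonneg (α := ℝ) m])

lemma div_anti_aux {c : ℝ} (hc : 0 < c) {a b : ℕ} (hab : a ≤ b) :
    1/((b:ℝ)+c) ≤ 1/((a:ℝ)+c) := by
  apply one_div_le_one_div_of_le (by positivity)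
  have : (a:ℝ) ≤ b := by exact_mod_cast hab
  linarith


theorem lCirc_eq (n d : ℕ) (hn : 1 ≤ n) (hd : 2 ≤ d) :
    lCirc d n = ENNReal.ofReal (max 1 ((n : ℝ) / 2 ^ d)) *
      volume (ball (0 : EuclideanSpace ℝ (Fin d)) (1/2)) := by
  haveI := nontrivial_euc (d := d) (by omega)
  set V1 := volume (ball (0 : EuclideanSpace ℝ (Fin d)) 1) with hV1
  have hV1top : V1 ≠ ⊤ := measure_ball_lt_top.ne
  have hb12 : volume (ball (0 : EuclideanSpace ℝ (Fin d)) (1/2)) =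
      ENNReal.ofReal ((1/2:ℝ) ^ d) * V1 := by
    rw [hV1, Measure.addHaar_ball _ _ (by norm_num : (0:ℝ) ≤ 1/2), finrank_euclideanSpace_fin]
  refine le_antisymm (lCirc_le n d hn hd) ?_
  rcases le_or_gt ((n:ℝ)/2^d) 1 with hc | hc
  · rw [max_eq_left hc, ENNReal.ofReal_one, one_mul, hb12]
    have hfor : ∀ m : ℕ, ENNReal.ofReal ((1/2 - 1/((m:ℝ)+4))^d) * V1 ≤ lCirc d n := by
      intro m
      exact caseA n d hn hd (by positivity) ((div_le_aux m 4 (by norm_num)).trans (by norm_num))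
    have hmono : Monotone (fun m : ℕ => ENNReal.ofReal ((1/2 - 1/((m:ℝ)+4))^d) * V1) := by
      intro a b hab
      apply mul_le_mul_left
      apply ENNReal.ofReal_le_ofReal
      apply pow_le_pow_left₀
      · have := div_le_aux a 4 (by norm_num)
        linarith
      · linarith [div_anti_aux (by norm_num : (0:ℝ) < 4) hab]
    have htend : Tendsto (fun m : ℕ => ENNReal.ofReal ((1/2 - 1/((m:ℝ)+4))^d) * V1) atTop
        (𝓝 (ENNReal.ofReal ((1/2:ℝ)^d) * V1)) := by
      apply ENNReal.Tendsto.mul_const _ (Or.inr hV1top)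
      apply ENNReal.tendsto_ofReal
      have h0 := tend_aux 4
      have h1 : Tendsto (fun m : ℕ => 1/2 - 1/((m:ℝ)+4)) atTop (𝓝 (1/2)) := by
        simpa using (tendsto_const_nhds (x := (1/2:ℝ)) (f := atTop)).sub h0
      exact h1.pow d
    rw [← iSup_eq_of_tendsto hmono htend]
    exact iSup_le hfor
  · rw [max_eq_right hc.le]
    have h2d : (0:ℝ) < 2^d := by positivity
    have hn2d : 2^d < n := by
      have : (2:ℝ)^d < n := by
        rw [lt_div_iff₀ h2d, one_mul] at hc
        linarith
      exact_mod_cast this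
    have hn5 : 5 ≤ n := by
      have h4 : 4 ≤ 2^d := by
        calc 4 = 2^2 := by norm_num
          _ ≤ 2^d := Nat.pow_le_pow_right (by norm_num) hd
      omega
    have hRHS : ENNReal.ofReal ((n:ℝ)/2^d) * volume (ball (0 : EuclideanSpace ℝ (Fin d)) (1/2))
        = ENNReal.ofReal ((n:ℝ) * (1/4:ℝ)^d) * V1 := by
      rw [hb12, ← mul_assoc, ← ENNReal.ofReal_mul (by positivity)]
      congr 2
      rw [div_eq_mul_inv, mul_assoc, ← inv_pow, ← mul_pow]
      norm_num
    rw [hRHS]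
    have hfor : ∀ m : ℕ, ENNReal.ofReal ((n:ℝ) * (1/4 - 1/((m:ℝ)+8))^d) * V1 ≤ lCirc d n := by
      intro m
      have hcb := caseB n d hn5 hd (δ := 1/((m:ℝ)+8)) (by positivity)
        ((div_le_aux m 8 (by norm_num)).trans (by norm_num))
      have hre : ENNReal.ofReal ((n:ℝ) * (1/4 - 1/((m:ℝ)+8))^d) * V1
          = (n : ENNReal) * (ENNReal.ofReal ((1/4 - 1/((m:ℝ)+8))^d) * V1) := by
        rw [ENNReal.ofReal_mul (by positivity), ENNReal.ofReal_natCast, mul_assoc]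
      rw [hre]
      exact hcb
    have hnon : ∀ m : ℕ, (0:ℝ) ≤ 1/4 - 1/((m:ℝ)+8) := by
      intro m
      have := (div_le_aux m 8 (by norm_num)).trans (by norm_num : (1:ℝ)/8 ≤ 1/4)
      linarith
    have hmono : Monotone (fun m : ℕ => ENNReal.ofReal ((n:ℝ) * (1/4 - 1/((m:ℝ)+8))^d) * V1) := by
      intro a b hab
      apply mul_le_mul_left
      apply ENNReal.ofReal_le_ofReal
      apply mul_le_mul_of_nonneg_left _ (Nat.cast_nonneg n)
      apply pow_le_pow_left₀ (hnon a)
      linarith [div_anti_aux (by norm_num : (0:ℝ) < 8) hab]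
    have htend : Tendsto (fun m : ℕ => ENNReal.ofReal ((n:ℝ) * (1/4 - 1/((m:ℝ)+8))^d) * V1)
        atTop (𝓝 (ENNReal.ofReal ((n:ℝ) * (1/4:ℝ)^d) * V1)) := by
      apply ENNReal.Tendsto.mul_const _ (Or.inr hV1top)
      apply ENNReal.tendsto_ofReal
      apply Tendsto.const_mul
      have h0 := tend_aux 8
      have h1 : Tendsto (fun m : ℕ => 1/4 - 1/((m:ℝ)+8)) atTop (𝓝 (1/4)) := by
        simpa using (tendsto_const_nhds (x := (1/4:ℝ)) (f := atTop)).sub h0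
      exact h1.pow d
    rw [← iSup_eq_of_tendsto hmono htend]
    exact iSup_le hfor
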